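/- Let 𝔤 ⊂ 𝔡 be a Manin pair with chosen Lagrangian complement, giving a vector space splitting 𝔡 ≅ 𝔥 ⊕ 𝔥' with 𝔥 = 𝔤 (here relabeled) Lagrangian. Writing the structure constants [e_i,e_j] = f_{ij}^k e_k, [e_i, ẽ_j] = A_{ij}^k e_k + B_{ij}^k ẽ_k, [ẽ_i, ẽ_j] = C_{ij}^k e_k + D_{ij}^k ẽ_k in bases {e_i} of 𝔥 and {ẽ_i} of the complement, and letting c = P + Q with P ∈ Sym²(𝔥), Q ∈ 𝔥 ⊗ 𝔡/𝔥 the inverse of the pairing, the formulas δ^{ij}_k = (1/2)(A^j_{ka} Q^{ia} − A^i_{ka} Q^{ja}) define a map δ: 𝔥 → ∧²(𝔥) which is a Chevalley–Eilenberg 1-cocycle (d_CE δ = 0). -/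
import Mathlib


/-!
STATEMENT 4: Let `𝔥 ⊂ 𝔡` be a Manin pair with chosen Lagrangian complement, giving a
vector-space splitting `𝔡 ≅ 𝔥 ⊕ 𝔥'` with bases `{e_i}` of `𝔥` and `{ẽ_i}` of the
complement, structure constants `f, A, B, C, D`, and `c = P + Q` the inverse of the
pairing (`P ∈ Sym²(𝔥)`, `Q ∈ 𝔥 ⊗ 𝔡/𝔥`).  The invariance of the pairing translates into
the identities (1)–(5) among the structure constants (taken as hypotheses here), and the
formula `δ^{ij}_k = (1/2)(A^j_{ka} Q^{ia} − A^i_{ka} Q^{ja})` defines a map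
`δ : 𝔥 → ∧²(𝔥)` which is a Chevalley–Eilenberg 1-cocycle, `d_CE δ = 0`.

The ambient Lie algebra `𝔡` is modelled abstractly (so all Jacobi identities among
`f, A, B, C, D` hold automatically).
-/

open Finset

variable {k : Type*} [Field k] [CharZero k]
variable {L : Type*} [LieRing L] [LieAlgebra k L]
variable {ι : Type*} [Fintype ι] [DecidableEq ι]

/-- Components of the Chevalley–Eilenberg differential `(d_CE δ)(e_p, e_q)^{ij}` of a
`∧²𝔥`-valued 1-cochain `δ` on the Lie algebra `𝔥` with structure constants `f`. -/
def dCEone (f δ : ι → ι → ι → k) (p q i j : ι) : k :=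
  (∑ a, (f p a i * δ q a j + f p a j * δ q i a))
    - (∑ a, (f q a i * δ p a j + f q a j * δ p i a))
    - (∑ a, f p q a * δ a i j)

/-- The cobracket components `δ^{ij}_k = (1/2)(A^j_{ka} Q^{ia} − A^i_{ka} Q^{ja})`. -/
def deltaForm (A : ι → ι → ι → k) (Q : ι → ι → k) (kk i j : ι) : k :=
  (1/2 : k) * ∑ a, (A kk a j * Q i a - A kk a i * Q j a)

section Helpers
variable {k : Type*} [Field k] [CharZero k]
variable {L : Type*} [LieRing L] [LieAlgebra k L]
variable {ι : Type*} [Fintype ι] [DecidableEq ι]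

set_option linter.unusedSectionVars false

theorem my_lie_sum (x : L) (s : Finset ι) (g : ι → L) :
    ⁅x, ∑ i ∈ s, g i⁆ = ∑ i ∈ s, ⁅x, g i⁆ := by
  induction s using Finset.cons_induction with
  | empty => simp
  | cons a s ha ih => rw [Finset.sum_cons, Finset.sum_cons, lie_add, ih]

theorem my_sum_lie (x : L) (s : Finset ι) (g : ι → L) :
    ⁅∑ i ∈ s, g i, x⁆ = ∑ i ∈ s, ⁅g i, x⁆ := by
  induction s using Finset.cons_induction with
  | empty => simp
  | cons a s ha ih => rw [Finset.sum_cons, Finset.sum_cons, add_lie, ih]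

theorem my_extract (e et : ι → L) (hindep : LinearIndependent k (Sum.elim e et))
    (a b : ι → k) (h : ∑ l, (a l • e l + b l • et l) = 0) : ∀ l, a l = 0 ∧ b l = 0 := by
  have key := Fintype.linearIndependent_iff.mp hindep (Sum.elim a b) ?_
  · exact fun l => ⟨key (.inl l), key (.inr l)⟩
  · rw [Fintype.sum_sum_type]
    simpa [Finset.sum_add_distrib] using h

theorem my_jacobi_expand (e et : ι → L) (f A B : ι → ι → ι → k)
    (hee : ∀ i j, ⁅e i, e j⁆ = ∑ l, f i j l • e l)
    (heet : ∀ i j, ⁅e i, et j⁆ = ∑ l, (A i j l • e l + B i j l • et l))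
    (p q m : ι) :
    ⁅e p, ⁅e q, et m⁆⁆ - ⁅⁅e p, e q⁆, et m⁆ - ⁅e q, ⁅e p, et m⁆⁆
      = ∑ r, (((∑ l, (A q m l * f p l r + B q m l * A p l r))
              - (∑ l, f p q l * A l m r)
              - (∑ l, (A p m l * f q l r + B p m l * A q l r))) • e r
           + ((∑ l, (B q m l * B p l r)) - (∑ l, f p q l * B l m r)
              - (∑ l, (B p m l * B q l r))) • et r) := by
  rw [heet q m, heet p m, hee p q, my_lie_sum, my_lie_sum, my_sum_lie]
  simp only [lie_add, lie_smul, smul_lie, hee, heet, Finset.smul_sum, smul_add, smul_smul,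
    Finset.sum_add_distrib]
  rw [Finset.sum_comm (γ := ι) (f := fun l r => (A q m l * f p l r) • e r),
      Finset.sum_comm (γ := ι) (f := fun l r => (B q m l * A p l r) • e r),
      Finset.sum_comm (γ := ι) (f := fun l r => (B q m l * B p l r) • et r),
      Finset.sum_comm (γ := ι) (f := fun l r => (f p q l * A l m r) • e r),
      Finset.sum_comm (γ := ι) (f := fun l r => (f p q l * B l m r) • et r),
      Finset.sum_comm (γ := ι) (f := fun l r => (A p m l * f q l r) • e r),
      Finset.sum_comm (γ := ι) (f := fun l r => (B p m l * A q l r) • e r),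
      Finset.sum_comm (γ := ι) (f := fun l r => (B p m l * B q l r) • et r)]
  simp only [sub_smul, add_smul, Finset.sum_smul, Finset.sum_add_distrib, Finset.sum_sub_distrib]
  abel

end Helpers

set_option linter.unusedSectionVars false in
/-- Factor out the `1/2` in `deltaForm` from the CE differential. -/
theorem my_half_dCE (f A : ι → ι → ι → k) (Q : ι → ι → k) (p q i j : ι) :
    dCEone f (deltaForm A Q) p q i j
      = (1/2 : k) * dCEone f
          (fun kk u v => ∑ b, (A kk b v * Q u b - A kk b u * Q v b)) p q i j := by
  simp only [dCEone, deltaForm]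
  conv_rhs => rw [mul_sub, mul_sub, Finset.mul_sum, Finset.mul_sum, Finset.mul_sum]
  congr 1
  · congr 1 <;> exact Finset.sum_congr rfl fun a _ => by ring
  · exact Finset.sum_congr rfl fun a _ => by ring

/-- In a Manin pair `𝔥 ⊂ 𝔡` with Lagrangian complement (bases `e`, `ẽ`
of `𝔥` and the complement, structure constants `f, A, B, C, D`, and `c = P + Q` the
inverse of the invariant pairing, encoded via the invariance identities (1)–(5)),
the formula `δ^{ij}_k = (1/2)(A^j_{ka} Q^{ia} − A^i_{ka} Q^{ja})` defines a
Chevalley–Eilenberg 1-cocycle `δ : 𝔥 → ∧²𝔥`, i.e. `d_CE δ = 0`. -/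
theorem maninPair_deltaForm_isCocycle
    (e et : ι → L) (f A B C D : ι → ι → ι → k) (P Q : ι → ι → k)
    (hindep : LinearIndependent k (Sum.elim e et))
    (hee : ∀ i j, ⁅e i, e j⁆ = ∑ l, f i j l • e l)
    (heet : ∀ i j, ⁅e i, et j⁆ = ∑ l, (A i j l • e l + B i j l • et l))
    (hetet : ∀ i j, ⁅et i, et j⁆ = ∑ l, (C i j l • e l + D i j l • et l))
    (hP : ∀ i j, P i j = P j i)
    (h1 : ∀ i a kk, ∑ j, (A j kk i * P j a + C j kk i * Q a j
            + A j kk a * P j i + C j kk a * Q i j) = 0)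
    (h2 : ∀ i a j, ∑ kk, (A j kk i * Q a kk - f kk j i * P kk a
            + A j kk a * Q i kk - f kk j a * P kk i) = 0)
    (h3 : ∀ i a kk, ∑ j, (A j kk i * Q j a + B j kk a * P i j + D j kk a * Q i j) = 0)
    (h4 : ∀ i a j, ∑ kk, f kk j i * Q kk a = ∑ kk, B j kk a * Q i kk)
    (h5 : ∀ i a kk, ∑ j, (B j kk i * Q j a + B j kk a * Q j i) = 0) :
    ∀ p q i j, dCEone f (deltaForm A Q) p q i j = 0 := by
  -- Antisymmetry of the structure constants f.
  have hF : ∀ i j l, f i j l = - f j i l := by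
    intro i j l
    have h0 : ∑ l, ((f i j l + f j i l) • e l + (0:k) • et l) = 0 := by
      simp only [zero_smul, add_zero, add_smul, Finset.sum_add_distrib, ← hee]
      rw [← lie_skew (e j) (e i)]
      abel
    have := (my_extract e et hindep _ _ h0 l).1
    linear_combination this
  -- Jacobi identity for the triple (e p, e q, et m): coefficient of e r.
  have hJ : ∀ p q m r, (∑ l, (A q m l * f p l r + B q m l * A p l r))
      - (∑ l, f p q l * A l m r)
      - (∑ l, (A p m l * f q l r + B p m l * A q l r)) = 0 := by
    intro p q m r
    have hb : ∑ r, (((∑ l, (A q m l * f p l r + B q m l * A p l r))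
              - (∑ l, f p q l * A l m r)
              - (∑ l, (A p m l * f q l r + B p m l * A q l r))) • e r
           + ((∑ l, (B q m l * B p l r)) - (∑ l, f p q l * B l m r)
              - (∑ l, (B p m l * B q l r))) • et r) = 0 := by
      rw [← my_jacobi_expand e et f A B hee heet p q m,
        leibniz_lie (e p) (e q) (et m)]
      abel
    exact (my_extract e et hindep _ _ hb r).1
  -- Consequence of invariance identity (4) and antisymmetry of f.
  have hH4 : ∀ r s b, ∑ a, f r a s * Q a b = - ∑ a, B r a b * Q s a := by
    intro r s b
    have h' : ∑ a, f r a s * Q a b = ∑ a, -(f a r s * Q a b) :=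
      Finset.sum_congr rfl fun a _ => by rw [hF r a s]; ring
    rw [h', Finset.sum_neg_distrib, h4 s b r]
  intro p q i j
  -- The first group of terms of the CE differential, reorganised.
  have hT : ∀ p q i j, (∑ a, (f p a i * (∑ b, (A q b j * Q a b - A q b a * Q j b))
                       + f p a j * (∑ b, (A q b a * Q i b - A q b i * Q a b))))
      = ∑ b, (Q i b * (∑ a, (A q b a * f p a j - B p b a * A q a j))
            - Q j b * (∑ a, (A q b a * f p a i - B p b a * A q a i))) := by
    intro p q i j
    calc (∑ a, (f p a i * (∑ b, (A q b j * Q a b - A q b a * Q j b))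
              + f p a j * (∑ b, (A q b a * Q i b - A q b i * Q a b))))
        = (∑ a, ∑ b, (A q b j * (f p a i * Q a b) - A q b i * (f p a j * Q a b)))
          + (∑ a, ∑ b, (Q i b * (A q b a * f p a j) - Q j b * (A q b a * f p a i))) := by
          rw [← Finset.sum_add_distrib]
          refine Finset.sum_congr rfl fun a _ => ?_
          rw [Finset.mul_sum, Finset.mul_sum, ← Finset.sum_add_distrib,
            ← Finset.sum_add_distrib]
          exact Finset.sum_congr rfl fun b _ => by ring
      _ = (∑ b, ∑ a, (A q b j * (f p a i * Q a b) - A q b i * (f p a j * Q a b)))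
          + (∑ b, ∑ a, (Q i b * (A q b a * f p a j) - Q j b * (A q b a * f p a i))) := by
          rw [Finset.sum_comm (f := fun a b =>
              (A q b j * (f p a i * Q a b) - A q b i * (f p a j * Q a b))),
            Finset.sum_comm (f := fun a b =>
              (Q i b * (A q b a * f p a j) - Q j b * (A q b a * f p a i)))]
      _ = (∑ b, (A q b i * (∑ a, B p a b * Q j a) - A q b j * (∑ a, B p a b * Q i a)))
          + (∑ b, (Q i b * (∑ a, A q b a * f p a j) - Q j b * (∑ a, A q b a * f p a i))) := by
          congr 1
          · refine Finset.sum_congr rfl fun b _ => ?_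
            rw [Finset.sum_sub_distrib, ← Finset.mul_sum, ← Finset.mul_sum,
              hH4 p i b, hH4 p j b]
            ring
          · refine Finset.sum_congr rfl fun b _ => ?_
            rw [Finset.sum_sub_distrib, ← Finset.mul_sum, ← Finset.mul_sum]
      _ = (∑ b, ∑ a, (Q j a * (B p a b * A q b i) - Q i a * (B p a b * A q b j)))
          + (∑ b, (Q i b * (∑ a, A q b a * f p a j) - Q j b * (∑ a, A q b a * f p a i))) := by
          congr 1
          refine Finset.sum_congr rfl fun b _ => ?_
          rw [Finset.sum_sub_distrib, Finset.mul_sum, Finset.mul_sum]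
          rw [sub_eq_neg_add, sub_eq_neg_add]
          congr 1
          · exact neg_inj.mpr (Finset.sum_congr rfl fun a _ => by ring)
          · exact Finset.sum_congr rfl fun a _ => by ring
      _ = (∑ b, ∑ a, (Q j b * (B p b a * A q a i) - Q i b * (B p b a * A q a j)))
          + (∑ b, (Q i b * (∑ a, A q b a * f p a j) - Q j b * (∑ a, A q b a * f p a i))) := by
          rw [Finset.sum_comm (f := fun b a =>
              (Q j a * (B p a b * A q b i) - Q i a * (B p a b * A q b j)))]
      _ = ∑ b, (Q i b * (∑ a, (A q b a * f p a j - B p b a * A q a j))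
            - Q j b * (∑ a, (A q b a * f p a i - B p b a * A q a i))) := by
          rw [← Finset.sum_add_distrib]
          refine Finset.sum_congr rfl fun b _ => ?_
          rw [Finset.sum_sub_distrib, Finset.sum_sub_distrib, Finset.sum_sub_distrib,
            ← Finset.mul_sum, ← Finset.mul_sum]
          ring
  -- The last group of terms of the CE differential, reorganised.
  have hT3 : ∑ a, (f p q a * (∑ b, (A a b j * Q i b - A a b i * Q j b)))
      = ∑ b, (Q i b * (∑ a, f p q a * A a b j) - Q j b * (∑ a, f p q a * A a b i)) := by
    calc ∑ a, (f p q a * (∑ b, (A a b j * Q i b - A a b i * Q j b)))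
        = ∑ a, ∑ b, (Q i b * (f p q a * A a b j) - Q j b * (f p q a * A a b i)) := by
          refine Finset.sum_congr rfl fun a _ => ?_
          rw [Finset.mul_sum]
          exact Finset.sum_congr rfl fun b _ => by ring
      _ = ∑ b, ∑ a, (Q i b * (f p q a * A a b j) - Q j b * (f p q a * A a b i)) :=
          Finset.sum_comm
      _ = ∑ b, (Q i b * (∑ a, f p q a * A a b j) - Q j b * (∑ a, f p q a * A a b i)) := by
          refine Finset.sum_congr rfl fun b _ => ?_
          rw [Finset.sum_sub_distrib, ← Finset.mul_sum, ← Finset.mul_sum]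
  -- The Jacobi identity in the final combined form.
  have hW : ∀ r b, (∑ a, (A q b a * f p a r - B p b a * A q a r))
      - (∑ a, (A p b a * f q a r - B q b a * A p a r))
      - (∑ a, f p q a * A a b r) = 0 := by
    intro r b
    have hj := hJ p q b r
    simp only [Finset.sum_add_distrib, Finset.sum_sub_distrib] at hj ⊢
    linear_combination hj
  -- Put everything together.
  rw [my_half_dCE]
  have hz : dCEone f (fun kk u v => ∑ b, (A kk b v * Q u b - A kk b u * Q v b)) p q i j
      = 0 := by
    simp only [dCEone]
    rw [hT p q i j, hT q p i j, hT3, ← Finset.sum_sub_distrib, ← Finset.sum_sub_distrib]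
    refine Finset.sum_eq_zero fun b _ => ?_
    have w1 := hW i b
    have w2 := hW j b
    linear_combination Q i b * w2 - Q j b * w1
  rw [hz, mul_zero]
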